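/- arXiv:1507.01196 — 2 statements merged into one kernel-verified Lean document; each statement's English description precedes it below -/
import Mathlib

section
/- (Expander Mixing Lemma) Let G be a d-regular graph on n vertices with adjacency matrix A, and let λ = max{λ_2, |λ_n|} where λ_1 ≥ ... ≥ λ_n are the eigenvalues of A. Then for all subsets S, T of the vertex set, | |E(S,T)| − d|S||T|/n | ≤ λ√(|S||T|), where E(S,T) counts edges with one endpoint in S and one in T (edges inside S ∩ T counted twice). -/
open Finset Matrix

private lemma aux_ip {n : ℕ} (x y : EuclideanSpace ℝ (Fin n)) : (inner ℝ x y : ℝ) = ∑ j, x j * y j := by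
  simp [PiLp.inner_apply, RCLike.inner_apply, conj_trivial, mul_comm]

private lemma aux_ind_sum {n : ℕ} (S : Finset (Fin n)) :
    ∑ j : Fin n, (if j ∈ S then (1:ℝ) else 0) = S.card := by
  simp [Finset.sum_ite_mem]

private lemma aux_ind_orth {n : ℕ} (hn : (n:ℝ) ≠ 0) (S : Finset (Fin n)) :
    ∑ j : Fin n, 1 * ((if j ∈ S then (1:ℝ) else 0) - S.card/n) = 0 := by
  simp only [one_mul, Finset.sum_sub_distrib, aux_ind_sum, Finset.sum_const,
    Finset.card_univ, Fintype.card_fin, nsmul_eq_mul]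
  field_simp
  simp

private lemma aux_ind_sq {n : ℕ} (hn : (0:ℝ) < n) (S : Finset (Fin n)) :
    ∑ j : Fin n, ((if j ∈ S then (1:ℝ) else 0) - S.card/n)^2 ≤ S.card := by
  have hterm : ∀ j : Fin n, ((if j ∈ S then (1:ℝ) else 0) - S.card/n)^2
      = (if j ∈ S then (1:ℝ) else 0) * (1 - 2*((S.card:ℝ)/n)) + ((S.card:ℝ)/n)^2 := by
    intro j
    by_cases h : j ∈ S <;> simp [h] <;> ring
  rw [Finset.sum_congr rfl fun j _ => hterm j, Finset.sum_add_distrib, ← Finset.sum_mul,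
    aux_ind_sum, Finset.sum_const, Finset.card_univ, Fintype.card_fin, nsmul_eq_mul]
  have heq : (S.card:ℝ) * (1 - 2*((S.card:ℝ)/n)) + (n:ℝ) * ((S.card:ℝ)/n)^2
      = (S.card:ℝ) - (S.card:ℝ)^2/n := by field_simp; ring
  rw [heq]
  have : 0 ≤ (S.card:ℝ)^2/n := div_nonneg (sq_nonneg _) hn.le
  linarith

private lemma aux_sym {n : ℕ} {A : Matrix (Fin n) (Fin n) ℝ} (hA : A.IsHermitian) (i j : Fin n) :
    A i j = A j i := by
  conv_lhs => rw [← hA]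
  simp [Matrix.conjTranspose_apply]

private lemma aux_eig {n : ℕ} {A : Matrix (Fin n) (Fin n) ℝ} (hA : A.IsHermitian) (i k : Fin n) :
    ∑ j, A k j * hA.eigenvectorBasis i j = hA.eigenvalues i * hA.eigenvectorBasis i k := by
  have := congrFun (hA.mulVec_eigenvectorBasis i) k
  simpa [Matrix.mulVec, dotProduct] using this

private lemma aux_herm {n : ℕ} {A : Matrix (Fin n) (Fin n) ℝ} (hA : A.IsHermitian)
    (i : Fin n) (b : EuclideanSpace ℝ (Fin n)) :
    (inner ℝ (hA.eigenvectorBasis i)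
      (WithLp.toLp 2 (A *ᵥ (b : Fin n → ℝ)) : EuclideanSpace ℝ (Fin n)) : ℝ)
      = hA.eigenvalues i * inner ℝ (hA.eigenvectorBasis i) b := by
  rw [aux_ip, aux_ip]
  calc ∑ j, hA.eigenvectorBasis i j * (A *ᵥ (b : Fin n → ℝ)) j
      = ∑ j, ∑ k, hA.eigenvectorBasis i j * (A j k * b k) := by
        refine Finset.sum_congr rfl fun j _ => ?_
        show hA.eigenvectorBasis i j * ∑ k, A j k * b k = _
        rw [Finset.mul_sum]
    _ = ∑ k, (∑ j, A k j * hA.eigenvectorBasis i j) * b k := by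
        rw [Finset.sum_comm]
        refine Finset.sum_congr rfl fun k _ => ?_
        rw [Finset.sum_mul]
        refine Finset.sum_congr rfl fun j _ => ?_
        rw [aux_sym hA j k]; ring
    _ = ∑ k, (hA.eigenvalues i * hA.eigenvectorBasis i k) * b k := by
        refine Finset.sum_congr rfl fun k _ => ?_
        rw [aux_eig hA i k]
    _ = hA.eigenvalues i * ∑ k, hA.eigenvectorBasis i k * b k := by
        rw [Finset.mul_sum]; refine Finset.sum_congr rfl fun k _ => by ring

private lemma aux_bilin {n : ℕ} {A : Matrix (Fin n) (Fin n) ℝ} (hA : A.IsHermitian)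
    (a b : EuclideanSpace ℝ (Fin n)) :
    ∑ j, a j * (A *ᵥ (b : Fin n → ℝ)) j
      = ∑ i, hA.eigenvalues i *
          ((inner ℝ a (hA.eigenvectorBasis i) : ℝ) * (inner ℝ (hA.eigenvectorBasis i) b : ℝ)) := by
  have h := hA.eigenvectorBasis.sum_inner_mul_inner a
    (WithLp.toLp 2 (A *ᵥ (b : Fin n → ℝ)) : EuclideanSpace ℝ (Fin n))
  calc ∑ j, a j * (A *ᵥ (b : Fin n → ℝ)) j
      = (inner ℝ a (WithLp.toLp 2 (A *ᵥ (b : Fin n → ℝ)) : EuclideanSpace ℝ (Fin n)) : ℝ) :=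
        (aux_ip a (WithLp.toLp 2 (A *ᵥ (b : Fin n → ℝ)))).symm
    _ = ∑ i, (inner ℝ a (hA.eigenvectorBasis i) : ℝ) *
          (inner ℝ (hA.eigenvectorBasis i)
            (WithLp.toLp 2 (A *ᵥ (b : Fin n → ℝ)) : EuclideanSpace ℝ (Fin n)) : ℝ) := h.symm
    _ = _ := by
        refine Finset.sum_congr rfl fun i _ => ?_
        rw [aux_herm hA i b]; ring

private lemma aux_unit {n : ℕ} {A : Matrix (Fin n) (Fin n) ℝ} (hA : A.IsHermitian) (i : Fin n) :
    (inner ℝ (hA.eigenvectorBasis i) (hA.eigenvectorBasis i) : ℝ) = 1 := by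
  rw [real_inner_self_eq_norm_sq, hA.eigenvectorBasis.orthonormal.1 i]
  norm_num



private lemma aux_quad {n d : ℕ} {A : Matrix (Fin n) (Fin n) ℝ}
    (hnn : ∀ i j, 0 ≤ A i j) (hrow : ∀ j, ∑ k, A j k = (d:ℝ))
    (hcol : ∀ k, ∑ j, A j k = (d:ℝ)) (v : Fin n → ℝ) :
    |∑ j, ∑ k, v j * (A j k * v k)| ≤ d * ∑ j, v j ^ 2 := by
  have hterm : ∀ j k, |v j * (A j k * v k)| ≤ A j k * ((v j ^ 2 + v k ^ 2)/2) := by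
    intro j k
    have h1 : |v j * (A j k * v k)| = A j k * (|v j| * |v k|) := by
      rw [abs_mul, abs_mul, abs_of_nonneg (hnn j k)]; ring
    rw [h1]
    refine mul_le_mul_of_nonneg_left ?_ (hnn j k)
    nlinarith [sq_abs (v j), sq_abs (v k), sq_nonneg (|v j| - |v k|)]
  calc |∑ j, ∑ k, v j * (A j k * v k)|
      ≤ ∑ j, ∑ k, |v j * (A j k * v k)| :=
        (Finset.abs_sum_le_sum_abs _ _).trans
          (Finset.sum_le_sum fun j _ => Finset.abs_sum_le_sum_abs _ _)
    _ ≤ ∑ j, ∑ k, A j k * ((v j ^ 2 + v k ^ 2)/2) :=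
        Finset.sum_le_sum fun j _ => Finset.sum_le_sum fun k _ => hterm j k
    _ = (∑ j, ∑ k, A j k * v j ^ 2)/2 + (∑ j, ∑ k, A j k * v k ^ 2)/2 := by
        symm
        rw [Finset.sum_div, Finset.sum_div, ← Finset.sum_add_distrib]
        refine Finset.sum_congr rfl fun j _ => ?_
        rw [Finset.sum_div, Finset.sum_div, ← Finset.sum_add_distrib]
        refine Finset.sum_congr rfl fun k _ => by ring
    _ = d * ∑ j, v j ^ 2 := by
        have h1 : ∑ j, ∑ k, A j k * v j ^ 2 = (d:ℝ) * ∑ j, v j ^ 2 := by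
          rw [Finset.mul_sum]
          refine Finset.sum_congr rfl fun j _ => ?_
          rw [← Finset.sum_mul, hrow j]
        have h2 : ∑ j, ∑ k, A j k * v k ^ 2 = (d:ℝ) * ∑ j, v j ^ 2 := by
          rw [Finset.sum_comm, Finset.mul_sum]
          refine Finset.sum_congr rfl fun k _ => ?_
          rw [← Finset.sum_mul, hcol k]
        rw [h1, h2]; ring

private lemma aux_mu_repr {n : ℕ} {A : Matrix (Fin n) (Fin n) ℝ} (hA : A.IsHermitian)
    (hherm : ∀ (i : Fin n) (b : EuclideanSpace ℝ (Fin n)),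
      (inner ℝ (hA.eigenvectorBasis i)
        (WithLp.toLp 2 (A *ᵥ (b : Fin n → ℝ)) : EuclideanSpace ℝ (Fin n)) : ℝ)
        = hA.eigenvalues i * inner ℝ (hA.eigenvectorBasis i) b)
    (hunit : ∀ i, (inner ℝ (hA.eigenvectorBasis i) (hA.eigenvectorBasis i) : ℝ) = 1)
    (i : Fin n) :
    hA.eigenvalues i
      = ∑ j, ∑ k, hA.eigenvectorBasis i j * (A j k * hA.eigenvectorBasis i k) := by
  have h := hherm i (hA.eigenvectorBasis i)
  rw [hunit i, mul_one] at h
  rw [← h, aux_ip]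
  refine Finset.sum_congr rfl fun j _ => ?_
  show hA.eigenvectorBasis i j * ∑ k, A j k * hA.eigenvectorBasis i k = _
  rw [Finset.mul_sum]

private lemma aux_unit_sum {n : ℕ} {A : Matrix (Fin n) (Fin n) ℝ} (hA : A.IsHermitian)
    (hunit : ∀ i, (inner ℝ (hA.eigenvectorBasis i) (hA.eigenvectorBasis i) : ℝ) = 1)
    (i : Fin n) : ∑ j, hA.eigenvectorBasis i j ^ 2 = 1 := by
  have := hunit i
  rw [aux_ip] at this
  rw [← this]
  exact Finset.sum_congr rfl fun j _ => (sq _)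



private lemma aux_main_sum {n d : ℕ} (hnn : (n:ℝ) ≠ 0) {A : Matrix (Fin n) (Fin n) ℝ}
    (hrow : ∀ j, ∑ k, A j k = (d:ℝ)) (hcol : ∀ k, ∑ j, A j k = (d:ℝ))
    (S T : Finset (Fin n)) :
    ∑ j : Fin n, ((if j ∈ S then (1:ℝ) else 0) - S.card/n) *
        (∑ k, A j k * ((if k ∈ T then (1:ℝ) else 0) - T.card/n))
      = (∑ p ∈ S, ∑ q ∈ T, A p q) - d * S.card * T.card / n := by
  have hinner : ∀ j, ∑ k, A j k * ((if k ∈ T then (1:ℝ) else 0) - T.card/n)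
      = (∑ q ∈ T, A j q) - (T.card:ℝ)/n * d := by
    intro j
    have hstep : ∀ k, A j k * ((if k ∈ T then (1:ℝ) else 0) - (T.card:ℝ)/n)
        = A j k * (if k ∈ T then (1:ℝ) else 0) - (T.card:ℝ)/n * A j k := fun k => by ring
    rw [Finset.sum_congr rfl fun k _ => hstep k, Finset.sum_sub_distrib, ← Finset.mul_sum, hrow j]
    congr 1
    simp [mul_ite, Finset.sum_ite_mem]
  rw [Finset.sum_congr rfl fun j _ => by rw [hinner j]]
  have hexp : ∀ j, ((if j ∈ S then (1:ℝ) else 0) - (S.card:ℝ)/n) * ((∑ q ∈ T, A j q) - (T.card:ℝ)/n * d)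
      = ((if j ∈ S then (1:ℝ) else 0) * (∑ q ∈ T, A j q)
         - ((T.card:ℝ)/n * d) * (if j ∈ S then (1:ℝ) else 0))
        - ((S.card:ℝ)/n * (∑ q ∈ T, A j q) - (S.card:ℝ)/n * ((T.card:ℝ)/n * d)) := fun j => by ring
  rw [Finset.sum_congr rfl fun j _ => hexp j]
  have h1 : ∑ j : Fin n, (if j ∈ S then (1:ℝ) else 0) * (∑ q ∈ T, A j q)
      = ∑ p ∈ S, ∑ q ∈ T, A p q := by
    simp [ite_mul, Finset.sum_ite_mem]
  have h3 : ∑ j : Fin n, (∑ q ∈ T, A j q) = (T.card:ℝ) * d := by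
    rw [show ∑ j : Fin n, ∑ q ∈ T, A j q = ∑ q ∈ T, ∑ j, A j q from Finset.sum_comm, Finset.sum_congr rfl fun q _ => hcol q]
    simp [mul_comm]
  rw [Finset.sum_sub_distrib, Finset.sum_sub_distrib, Finset.sum_sub_distrib,
    ← Finset.mul_sum, ← Finset.mul_sum, ← Finset.mul_sum, h1, h3, aux_ind_sum,
    Finset.sum_const, Finset.card_univ, Fintype.card_fin, nsmul_eq_mul]
  field_simp
  ring

/-- Expander Mixing Lemma: for a `d`-regular graph `G` on `n` vertices with
adjacency eigenvalues `ev 0 ≥ ev 1 ≥ … ≥ ev (n-1)` and `λ = max (ev 1) |ev (n-1)|`,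
for all vertex sets `S, T`, `| |E(S,T)| − d|S||T|/n | ≤ λ √(|S||T|)`,
where `|E(S,T)| = ∑_{s ∈ S, t ∈ T} A(s,t)` (edges inside `S ∩ T` counted twice). -/
theorem stmt2 (n d : ℕ) (hn : 2 ≤ n) (G : SimpleGraph (Fin n)) [DecidableRel G.Adj]
    (hreg : G.IsRegularOfDegree d)
    (hA : (G.adjMatrix ℝ).IsHermitian)
    (ev : Fin n → ℝ) (σ : Equiv.Perm (Fin n))
    (hev : ev = hA.eigenvalues ∘ σ) (hsort : Antitone ev)
    (lam : ℝ)
    (hlam : lam = max (ev ⟨1, by omega⟩) |ev ⟨n - 1, by omega⟩|)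
    (S T : Finset (Fin n)) :
    |(∑ s ∈ S, ∑ t ∈ T, G.adjMatrix ℝ s t) - d * S.card * T.card / n|
      ≤ lam * Real.sqrt (S.card * T.card) := by
  set A := G.adjMatrix ℝ with hAdef
  have hn0 : (0:ℝ) < n := by positivity
  have hnn : (n:ℝ) ≠ 0 := ne_of_gt hn0
  have hAnn : ∀ i j, 0 ≤ A i j := by
    intro i j
    rw [hAdef, SimpleGraph.adjMatrix_apply]
    split <;> norm_num
  have hrow : ∀ j, ∑ k, A j k = (d:ℝ) := by
    intro j
    have h1 : ∑ k, A j k = ((univ.filter (G.Adj j)).card : ℝ) := by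
      rw [hAdef]; simp [SimpleGraph.adjMatrix_apply, Finset.sum_boole]
    rw [h1, ← SimpleGraph.neighborFinset_eq_filter]
    norm_cast
    exact hreg j
  have hcol : ∀ k, ∑ j, A j k = (d:ℝ) := by
    intro k
    calc ∑ j, A j k = ∑ j, A k j := Finset.sum_congr rfl fun j _ => aux_sym hA j k
      _ = d := hrow k
  -- vectors
  set ONE : EuclideanSpace ℝ (Fin n) := WithLp.toLp 2 (fun _ => (1:ℝ)) with hONEdef
  set X : EuclideanSpace ℝ (Fin n) :=
    WithLp.toLp 2 (fun v => (if v ∈ S then (1:ℝ) else 0) - (S.card : ℝ)/n) with hXdef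
  set Y : EuclideanSpace ℝ (Fin n) :=
    WithLp.toLp 2 (fun v => (if v ∈ T then (1:ℝ) else 0) - (T.card : ℝ)/n) with hYdef
  have hAone : ∀ j, (A *ᵥ (ONE : Fin n → ℝ)) j = (d:ℝ) := by
    intro j
    show ∑ k, A j k * 1 = (d:ℝ)
    simp [hrow j]
  have hXone : (inner ℝ ONE X : ℝ) = 0 := by
    rw [aux_ip]; exact aux_ind_orth hnn S
  have hXX : (inner ℝ X X : ℝ) ≤ (S.card : ℝ) := by
    rw [aux_ip]
    calc ∑ j, X j * X j = ∑ j : Fin n, ((if j ∈ S then (1:ℝ) else 0) - S.card/n)^2 :=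
          Finset.sum_congr rfl fun j _ => (sq (X j)).symm
    _ ≤ S.card := aux_ind_sq hn0 S
  have hYY : (inner ℝ Y Y : ℝ) ≤ (T.card : ℝ) := by
    rw [aux_ip]
    calc ∑ j, Y j * Y j = ∑ j : Fin n, ((if j ∈ T then (1:ℝ) else 0) - T.card/n)^2 :=
          Finset.sum_congr rfl fun j _ => (sq (Y j)).symm
    _ ≤ T.card := aux_ind_sq hn0 T
  -- eigenvalue bookkeeping
  have hmu : ∀ i, |hA.eigenvalues i| ≤ d := by
    intro i
    rw [aux_mu_repr hA (aux_herm hA) (aux_unit hA) i]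
    have h3 : (d:ℝ) * ∑ j, hA.eigenvectorBasis i j ^ 2 = d := by
      rw [aux_unit_sum hA (aux_unit hA) i, mul_one]
    exact le_of_le_of_eq (aux_quad hAnn hrow hcol _) h3
  have hevμ : ∀ i, hA.eigenvalues i = ev (σ.symm i) := by
    intro i; rw [hev]; simp
  have hub : ∀ j : Fin n, ev j ≤ ev ⟨0, by omega⟩ :=
    fun j => hsort (by rw [Fin.le_def]; exact Nat.zero_le _)
  have hlb : ∀ j : Fin n, ev ⟨n - 1, by omega⟩ ≤ ev j :=
    fun j => hsort (by rw [Fin.le_def]; show j.val ≤ n - 1; have := j.isLt; omega)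
  have hlam0 : 0 ≤ lam := by
    rw [hlam]; exact le_trans (abs_nonneg _) (le_max_right _ _)
  have hneglam : ∀ j : Fin n, -lam ≤ ev j := by
    intro j
    have h1 : -lam ≤ -|ev ⟨n - 1, by omega⟩| :=
      neg_le_neg (by rw [hlam]; exact le_max_right _ _)
    exact le_trans (h1.trans (neg_abs_le _)) (hlb j)
  have hd_eigen : ∀ k, hA.eigenvalues k * (inner ℝ (hA.eigenvectorBasis k) ONE : ℝ)
      = d * (inner ℝ (hA.eigenvectorBasis k) ONE : ℝ) := by
    intro k
    have h1 := aux_herm hA k ONE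
    have h2 : (inner ℝ (hA.eigenvectorBasis k)
        (WithLp.toLp 2 (A *ᵥ (ONE : Fin n → ℝ)) : EuclideanSpace ℝ (Fin n)) : ℝ)
        = d * (inner ℝ (hA.eigenvectorBasis k) ONE : ℝ) := by
      rw [aux_ip, aux_ip]
      have hstep : ∀ j, hA.eigenvectorBasis k j * (A *ᵥ (ONE : Fin n → ℝ)) j
          = (d:ℝ) * (hA.eigenvectorBasis k j * ONE j) := by
        intro j
        rw [hAone j]
        show hA.eigenvectorBasis k j * d = (d:ℝ) * (hA.eigenvectorBasis k j * 1)
        ring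
      rw [Finset.sum_congr rfl fun j _ => hstep j, ← Finset.mul_sum]
    exact h1.symm.trans h2
  have hex : ∃ k, (inner ℝ (hA.eigenvectorBasis k) ONE : ℝ) ≠ 0 := by
    by_contra hc
    push_neg at hc
    have h := hA.eigenvectorBasis.sum_repr' ONE
    rw [Finset.sum_eq_zero (fun k _ => by rw [hc k, zero_smul])] at h
    have h1 := congrArg (fun v : EuclideanSpace ℝ (Fin n) => v ⟨0, by omega⟩) h
    simp only [hONEdef] at h1
    norm_num at h1
  have hev0d : ev ⟨0, by omega⟩ = (d:ℝ) := by
    have hle : ev ⟨0, by omega⟩ ≤ d := by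
      have h1 := hmu (σ ⟨0, by omega⟩)
      have h2 : ev ⟨0, by omega⟩ = hA.eigenvalues (σ ⟨0, by omega⟩) := by rw [hev]; simp
      rw [h2]
      exact le_trans (le_abs_self _) h1
    have hge : (d:ℝ) ≤ ev ⟨0, by omega⟩ := by
      obtain ⟨k, hk⟩ := hex
      have h1 : hA.eigenvalues k = d := mul_right_cancel₀ hk (hd_eigen k)
      calc (d:ℝ) = hA.eigenvalues k := h1.symm
        _ = ev (σ.symm k) := hevμ k
        _ ≤ ev ⟨0, by omega⟩ := hub _
    linarith
  -- the key dichotomy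
  have hkey : ∀ i, |hA.eigenvalues i| ≤ lam ∨ (inner ℝ (hA.eigenvectorBasis i) X : ℝ) = 0 := by
    intro i
    rcases le_or_gt (ev ⟨0, by omega⟩) lam with hle | hgt
    · left
      rw [abs_le, hevμ i]
      exact ⟨hneglam _, le_trans (hub _) hle⟩
    · by_cases hi : σ.symm i = (⟨0, by omega⟩ : Fin n)
      · right
        have hothers : ∀ k, k ≠ i → (inner ℝ (hA.eigenvectorBasis k) ONE : ℝ) = 0 := by
          intro k hk
          have h5 : σ.symm k ≠ (⟨0, by omega⟩ : Fin n) := by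
            intro h
            exact hk (σ.symm.injective (h.trans hi.symm))
          have h6 : hA.eigenvalues k ≤ ev ⟨1, by omega⟩ := by
            rw [hevμ k]
            refine hsort ?_
            rw [Fin.le_def]
            show 1 ≤ (σ.symm k).val
            have : (σ.symm k).val ≠ 0 := fun h => h5 (Fin.ext h)
            omega
          have h7 : hA.eigenvalues k ≤ lam := h6.trans (by rw [hlam]; exact le_max_left _ _)
          have hne : hA.eigenvalues k ≠ (d:ℝ) := by
            intro h8
            rw [h8, ← hev0d] at h7
            linarith
          by_contra h0
          exact hne (mul_right_cancel₀ h0 (hd_eigen k))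
        have hexpand : ONE
            = (inner ℝ (hA.eigenvectorBasis i) ONE : ℝ) • hA.eigenvectorBasis i := by
          have h := hA.eigenvectorBasis.sum_repr' ONE
          rw [Finset.sum_eq_single i (fun k _ hk => by rw [hothers k hk, zero_smul])
            (fun hni => absurd (Finset.mem_univ i) hni)] at h
          exact h.symm
        have ht : (inner ℝ (hA.eigenvectorBasis i) ONE : ℝ) ≠ 0 := by
          intro h0
          rw [h0, zero_smul] at hexpand
          have h1 := congrArg (fun v : EuclideanSpace ℝ (Fin n) => v ⟨0, by omega⟩) hexpand
          simp only [hONEdef] at h1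
          norm_num at h1
        have hz : (inner ℝ (hA.eigenvectorBasis i) ONE : ℝ)
            * (inner ℝ (hA.eigenvectorBasis i) X : ℝ) = 0 := by
          calc (inner ℝ (hA.eigenvectorBasis i) ONE : ℝ) * (inner ℝ (hA.eigenvectorBasis i) X : ℝ)
              = (inner ℝ ((inner ℝ (hA.eigenvectorBasis i) ONE : ℝ) • hA.eigenvectorBasis i) X : ℝ) :=
                (real_inner_smul_left _ _ _).symm
            _ = (inner ℝ ONE X : ℝ) := by rw [← hexpand]
            _ = 0 := hXone
        exact (mul_eq_zero.mp hz).resolve_left ht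
      · left
        rw [abs_le, hevμ i]
        constructor
        · exact hneglam _
        · have h6 : ev (σ.symm i) ≤ ev ⟨1, by omega⟩ := by
            refine hsort ?_
            rw [Fin.le_def]
            show 1 ≤ (σ.symm i).val
            have : (σ.symm i).val ≠ 0 := fun h => hi (Fin.ext h)
            omega
          exact h6.trans (by rw [hlam]; exact le_max_left _ _)
  -- main identity
  have hmain : (∑ s ∈ S, ∑ t ∈ T, A s t) - d * S.card * T.card / n
      = ∑ i, hA.eigenvalues i * ((inner ℝ X (hA.eigenvectorBasis i) : ℝ)
          * (inner ℝ (hA.eigenvectorBasis i) Y : ℝ)) := by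
    calc (∑ s ∈ S, ∑ t ∈ T, A s t) - (d:ℝ) * S.card * T.card / n
        = ∑ j, X j * (A *ᵥ (Y : Fin n → ℝ)) j := (aux_main_sum hnn hrow hcol S T).symm
      _ = _ := aux_bilin hA X Y
  -- Parseval
  have hX2 : ∑ i, |(inner ℝ X (hA.eigenvectorBasis i) : ℝ)|^2 = (inner ℝ X X : ℝ) := by
    rw [← hA.eigenvectorBasis.sum_inner_mul_inner X X]
    refine Finset.sum_congr rfl fun i _ => ?_
    rw [sq_abs, sq, real_inner_comm (hA.eigenvectorBasis i) X]
  have hY2 : ∑ i, |(inner ℝ (hA.eigenvectorBasis i) Y : ℝ)|^2 = (inner ℝ Y Y : ℝ) := by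
    rw [← hA.eigenvectorBasis.sum_inner_mul_inner Y Y]
    refine Finset.sum_congr rfl fun i _ => ?_
    rw [sq_abs, sq, real_inner_comm (hA.eigenvectorBasis i) Y]
  -- final chain
  calc |(∑ s ∈ S, ∑ t ∈ T, A s t) - (d:ℝ) * S.card * T.card / n|
      = |∑ i, hA.eigenvalues i * ((inner ℝ X (hA.eigenvectorBasis i) : ℝ)
          * (inner ℝ (hA.eigenvectorBasis i) Y : ℝ))| := by rw [hmain]
    _ ≤ ∑ i, |hA.eigenvalues i * ((inner ℝ X (hA.eigenvectorBasis i) : ℝ)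
          * (inner ℝ (hA.eigenvectorBasis i) Y : ℝ))| := Finset.abs_sum_le_sum_abs _ _
    _ ≤ ∑ i, lam * (|(inner ℝ X (hA.eigenvectorBasis i) : ℝ)|
          * |(inner ℝ (hA.eigenvectorBasis i) Y : ℝ)|) := by
        refine Finset.sum_le_sum fun i _ => ?_
        rcases hkey i with h | h
        · rw [abs_mul, abs_mul]
          exact mul_le_mul_of_nonneg_right h (by positivity)
        · have h' : (inner ℝ X (hA.eigenvectorBasis i) : ℝ) = 0 := by
            rw [real_inner_comm]; exact h
          rw [h']
          simp
    _ = lam * ∑ i, |(inner ℝ X (hA.eigenvectorBasis i) : ℝ)|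
          * |(inner ℝ (hA.eigenvectorBasis i) Y : ℝ)| := (Finset.mul_sum _ _ _).symm
    _ ≤ lam * Real.sqrt (S.card * T.card) := by
        refine mul_le_mul_of_nonneg_left ?_ hlam0
        have hcs := Finset.sum_mul_sq_le_sq_mul_sq univ
          (fun i => |(inner ℝ X (hA.eigenvectorBasis i) : ℝ)|)
          (fun i => |(inner ℝ (hA.eigenvectorBasis i) Y : ℝ)|)
        have hnonneg : (0:ℝ) ≤ ∑ i, |(inner ℝ X (hA.eigenvectorBasis i) : ℝ)|
            * |(inner ℝ (hA.eigenvectorBasis i) Y : ℝ)| := by positivity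
        calc ∑ i, |(inner ℝ X (hA.eigenvectorBasis i) : ℝ)|
              * |(inner ℝ (hA.eigenvectorBasis i) Y : ℝ)|
            = Real.sqrt ((∑ i, |(inner ℝ X (hA.eigenvectorBasis i) : ℝ)|
                * |(inner ℝ (hA.eigenvectorBasis i) Y : ℝ)|)^2) := (Real.sqrt_sq hnonneg).symm
          _ ≤ Real.sqrt ((S.card:ℝ) * T.card) := by
              refine Real.sqrt_le_sqrt ?_
              calc (∑ i, |(inner ℝ X (hA.eigenvectorBasis i) : ℝ)|
                    * |(inner ℝ (hA.eigenvectorBasis i) Y : ℝ)|)^2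
                  ≤ (∑ i, |(inner ℝ X (hA.eigenvectorBasis i) : ℝ)|^2)
                    * (∑ i, |(inner ℝ (hA.eigenvectorBasis i) Y : ℝ)|^2) := hcs
                _ = (inner ℝ X X : ℝ) * (inner ℝ Y Y : ℝ) := by rw [hX2, hY2]
                _ ≤ (S.card:ℝ) * T.card :=
                    mul_le_mul hXX hYY real_inner_self_nonneg (Nat.cast_nonneg _)
end

section
/- (Discrete Cheeger inequality, easy direction) For a d-regular graph G with second-largest adjacency eigenvalue λ_2, the edge expansion satisfies h(G) ≥ (d − λ_2)/2. -/
open scoped RealInnerProductSpace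
open Matrix

lemma spectral_bound (n : ℕ) (A : Matrix (Fin n) (Fin n) ℝ) (hA : A.IsHermitian)
    (d lam : ℝ) (i0 : Fin n)
    (hle : ∀ i, i ≠ i0 → hA.eigenvalues i ≤ lam)
    (hlam : lam < d)
    (one : EuclideanSpace ℝ (Fin n)) (hone : one ≠ 0)
    (hrow : Matrix.toEuclideanLin A one = d • one)
    (v : EuclideanSpace ℝ (Fin n)) (hperp : ⟪one, v⟫ = 0) :
    ⟪v, Matrix.toEuclideanLin A v⟫ ≤ lam * ‖v‖ ^ 2 := by
  set B := hA.eigenvectorBasis with hB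
  set μ := hA.eigenvalues with hμ
  set T := Matrix.toEuclideanLin A with hT
  have hTsym : T.IsSymmetric := Matrix.isHermitian_iff_isSymmetric.mp hA
  have hTB : ∀ j, T (B j) = μ j • B j := by
    intro j
    ext i
    exact congrFun (hA.mulVec_eigenvectorBasis j) i
  have hreprT : ∀ (w : EuclideanSpace ℝ (Fin n)) (i : Fin n),
      B.repr (T w) i = μ i * B.repr w i := by
    intro w i
    rw [B.repr_apply_apply, B.repr_apply_apply, ← hTsym (B i) w, hTB i,
      real_inner_smul_left]
  have haz : ∀ i, i ≠ i0 → B.repr one i = 0 := by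
    intro i hi
    have h0 := hreprT one i
    rw [hrow, _root_.map_smul] at h0
    have h1 : μ i * B.repr one i = d * B.repr one i := by
      simpa only [PiLp.smul_apply, smul_eq_mul] using h0.symm
    have h2 : μ i < d := lt_of_le_of_lt (hle i hi) hlam
    rcases mul_eq_zero.mp (show (d - μ i) * B.repr one i = 0 by
      rw [sub_mul, h1, sub_self]) with h | h
    · exact absurd h (by intro hh; linarith)
    · exact h
  have hai0 : B.repr one i0 ≠ 0 := by
    intro h
    apply hone
    have hz : B.repr one = 0 := by
      ext i
      by_cases hi : i = i0
      · rw [hi]; exact h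
      · exact haz i hi
    simpa using B.repr.map_eq_zero_iff.mp hz
  have hperp' : B.repr one i0 * B.repr v i0 = 0 := by
    have h1 : ⟪B.repr one, B.repr v⟫ = (0:ℝ) := by
      rw [B.repr.inner_map_map]; exact hperp
    rw [PiLp.inner_apply] at h1
    simp only [RCLike.inner_apply, conj_trivial] at h1
    rw [← h1, Finset.sum_eq_single i0, mul_comm]
    · intro b _ hb; rw [haz b hb, mul_zero]
    · simp
  have hci0 : B.repr v i0 = 0 := by
    rcases mul_eq_zero.mp hperp' with h | h
    · exact absurd h hai0
    · exact h
  have hIP : ⟪v, T v⟫ = ∑ i, μ i * B.repr v i ^ 2 := by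
    rw [← B.repr.inner_map_map v (T v), PiLp.inner_apply]
    simp only [RCLike.inner_apply, conj_trivial]
    refine Finset.sum_congr rfl fun i _ => ?_
    rw [hreprT v i]; ring
  have hNorm : ‖v‖ ^ 2 = ∑ i, B.repr v i ^ 2 := by
    rw [← B.repr.norm_map v, ← real_inner_self_eq_norm_sq, PiLp.inner_apply]
    simp only [RCLike.inner_apply, conj_trivial, sq]
  rw [hIP, hNorm, Finset.mul_sum]
  refine Finset.sum_le_sum fun i _ => ?_
  by_cases hi : i = i0
  · subst hi; rw [hci0]; simp
  · have := hle i hi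
    nlinarith [sq_nonneg (B.repr v i)]


/-- Discrete Cheeger inequality, easy direction: for a `d`-regular graph `G` with
second-largest adjacency eigenvalue `ev 1`, every set `S` with `1 ≤ |S| ≤ n/2`
has edge expansion `|E(S, S̄)|/|S| ≥ (d − λ₂)/2`. -/
theorem stmt3 (n d : ℕ) (hn : 2 ≤ n) (G : SimpleGraph (Fin n)) [DecidableRel G.Adj]
    (hreg : G.IsRegularOfDegree d)
    (hA : (G.adjMatrix ℝ).IsHermitian)
    (ev : Fin n → ℝ) (σ : Equiv.Perm (Fin n))
    (hev : ev = hA.eigenvalues ∘ σ) (hsort : Antitone ev)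
    (S : Finset (Fin n)) (hS1 : 1 ≤ S.card) (hS2 : 2 * S.card ≤ n) :
    ((d : ℝ) - ev ⟨1, by omega⟩) / 2
      ≤ (∑ s ∈ S, ∑ t ∈ Sᶜ, G.adjMatrix ℝ s t) / S.card := by
  haveI : NeZero n := ⟨by omega⟩
  set A := G.adjMatrix ℝ with hAdef
  set lam := ev ⟨1, by omega⟩ with hlamdef
  set C := ∑ s ∈ S, ∑ t ∈ Sᶜ, A s t with hCdef
  have hApos : ∀ i j, 0 ≤ A i j := by
    intro i j; rw [hAdef]; simp [SimpleGraph.adjMatrix_apply]; positivity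
  have hCnn : 0 ≤ C :=
    Finset.sum_nonneg fun i _ => Finset.sum_nonneg fun j _ => hApos i j
  have hs0 : (0:ℝ) < S.card := by exact_mod_cast hS1
  by_cases hcase : (d:ℝ) ≤ lam
  · have h1 : ((d:ℝ) - lam) / 2 ≤ 0 := by linarith
    have h2 : (0:ℝ) ≤ C / S.card := div_nonneg hCnn hs0.le
    linarith
  push_neg at hcase
  -- notation
  set s : ℝ := (S.card : ℝ) with hsdef
  set nn : ℝ := (n : ℝ) with hnndef
  have hnnpos : (0:ℝ) < nn := by rw [hnndef]; exact_mod_cast (by omega : 0 < n)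
  set r : ℝ := s / nn with hrdef
  have hr : r * nn = s := div_mul_cancel₀ s hnnpos.ne'
  have hS2' : (2:ℝ) * s ≤ nn := by
    rw [hsdef, hnndef]; exact_mod_cast hS2
  have hr2 : 2 * r ≤ 1 := by
    rw [hrdef, mul_div_assoc', div_le_one hnnpos]; exact hS2'
  set g : Fin n → ℝ := fun i => if i ∈ S then 1 else 0 with hgdef
  set one : EuclideanSpace ℝ (Fin n) := WithLp.toLp 2 (fun _ => (1:ℝ)) with honedef
  set f : EuclideanSpace ℝ (Fin n) := WithLp.toLp 2 (fun i => g i - r) with hfdef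
  -- basic sums
  have hrowsum : ∀ i, ∑ j, A i j = (d:ℝ) := by
    intro i
    rw [hAdef]
    simp only [SimpleGraph.adjMatrix_apply, Finset.sum_boole]
    norm_cast
    rw [← SimpleGraph.neighborFinset_eq_filter]
    exact hreg i
  have hsym : ∀ i j, A i j = A j i := by
    intro i j; rw [hAdef]; simp only [SimpleGraph.adjMatrix_apply]
    exact if_congr (G.adj_comm i j) rfl rfl
  have hgsum : ∑ i, g i = s := by
    rw [hgdef, hsdef]; simp
  -- hypotheses for spectral_bound
  have hone0 : one ≠ 0 := by
    intro h
    have h0 := congrArg (fun w : EuclideanSpace ℝ (Fin n) => w ⟨0, by omega⟩) h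
    simp only [honedef] at h0
    exact one_ne_zero h0
  have hrow : Matrix.toEuclideanLin A one = (d:ℝ) • one := by
    apply PiLp.ext
    intro i
    show (A *ᵥ (Function.const (Fin n) (1:ℝ))) i = ((d:ℝ) • one) i
    rw [hAdef, G.adjMatrix_mulVec_const_apply_of_regular hreg]
    simp [honedef]
  have hperp : ⟪one, f⟫ = (0:ℝ) := by
    rw [PiLp.inner_apply]
    simp only [RCLike.inner_apply, conj_trivial, honedef, hfdef, one_mul, mul_one]
    rw [Finset.sum_sub_distrib, hgsum, Finset.sum_const, Finset.card_univ,
      Fintype.card_fin, nsmul_eq_mul, ← hnndef, hrdef]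
    field_simp; ring
  have hle : ∀ i, i ≠ σ 0 → hA.eigenvalues i ≤ lam := by
    intro i hi
    have h1 : hA.eigenvalues i = ev (σ.symm i) := by
      rw [hev]; simp
    rw [h1, hlamdef]
    apply hsort
    have h2 : σ.symm i ≠ 0 := by
      intro h; apply hi
      rw [← h]; simp
    rw [Fin.le_def]
    have h3 : (σ.symm i).val ≠ 0 := by
      intro h; apply h2; exact Fin.ext h
    simpa using Nat.one_le_iff_ne_zero.mpr h3
  have hkey := spectral_bound n A hA d lam (σ 0) hle hcase one hone0 hrow f hperp
  -- compute the quadratic form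
  set Q : ℝ := ∑ i ∈ S, ∑ j ∈ S, A i j with hQdef
  have hfilt : Finset.univ.filter (· ∈ S) = S := by ext x; simp
  have hind : ∀ (c : Fin n → ℝ), (∑ i, g i * c i) = ∑ i ∈ S, c i := by
    intro c
    have h : ∀ i, g i * c i = if i ∈ S then c i else 0 := by
      intro i; by_cases hi : i ∈ S <;> simp [hgdef, hi]
    rw [Finset.sum_congr rfl fun i _ => h i, ← Finset.sum_filter, hfilt]
  have hsumQ : ∑ i, ∑ j, A i j * g i * g j = Q := by
    have e : ∀ i, ∑ j, A i j * g i * g j = g i * ∑ j, g j * A i j := by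
      intro i; rw [Finset.mul_sum]; exact Finset.sum_congr rfl fun j _ => by ring
    rw [Finset.sum_congr rfl fun i _ => e i, hind, hQdef]
    exact Finset.sum_congr rfl fun i _ => hind fun j => A i j
  have hsum1 : ∑ i, ∑ j, A i j * g i = (d:ℝ) * s := by
    have h : ∀ i, ∑ j, A i j * g i = g i * (d:ℝ) := by
      intro i
      rw [← Finset.sum_mul, hrowsum i, mul_comm]
    simp_rw [h]
    rw [← Finset.sum_mul, hgsum, mul_comm]
  have hsum2 : ∑ i, ∑ j, A i j * g j = (d:ℝ) * s := by
    rw [Finset.sum_comm]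
    have h : ∀ j, ∑ i, A i j * g j = g j * (d:ℝ) := by
      intro j
      rw [← Finset.sum_mul]
      have : ∑ i, A i j = (d:ℝ) := by
        rw [Finset.sum_congr rfl fun i _ => hsym i j]
        exact hrowsum j
      rw [this, mul_comm]
    simp_rw [h]
    rw [← Finset.sum_mul, hgsum, mul_comm]
  have hsumA : ∑ i, ∑ j, A i j = (d:ℝ) * nn := by
    simp_rw [hrowsum]
    rw [Finset.sum_const, Finset.card_univ, Fintype.card_fin, nsmul_eq_mul, ← hnndef,
      mul_comm]
  have hIP : ⟪f, Matrix.toEuclideanLin A f⟫ = Q - 2*r*((d:ℝ)*s) + r^2*((d:ℝ)*nn) := by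
    rw [PiLp.inner_apply]
    simp only [RCLike.inner_apply, conj_trivial]
    have e1 : ∀ i, f i * (Matrix.toEuclideanLin A f) i
        = ∑ j, (A i j * g i * g j - r * (A i j * g i) - r * (A i j * g j) + r^2 * A i j) := by
      intro i
      show f i * (A *ᵥ (f : Fin n → ℝ)) i = _
      rw [Matrix.mulVec, dotProduct, Finset.mul_sum]
      refine Finset.sum_congr rfl fun j _ => ?_
      have hfi : f i = g i - r := rfl
      have hfj : f j = g j - r := rfl
      rw [hfi, hfj]; ring
    simp_rw [mul_comm _ (f _), e1]
    simp only [Finset.sum_add_distrib, Finset.sum_sub_distrib, ← Finset.mul_sum]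
    rw [hsumQ, hsum1, hsum2, hsumA]
    ring
  have hNS : ‖f‖^2 = s - 2*r*s + r^2*nn := by
    rw [← real_inner_self_eq_norm_sq, PiLp.inner_apply]
    simp only [RCLike.inner_apply, conj_trivial]
    have e1 : ∀ i, f i * f i = g i * g i - 2*r*g i + r^2 := by
      intro i
      have hfi : f i = g i - r := rfl
      rw [hfi]; ring
    have e2 : ∀ i, g i * g i = g i := by
      intro i; by_cases hi : i ∈ S <;> simp [hgdef, hi]
    simp_rw [e1, e2]
    rw [Finset.sum_add_distrib, Finset.sum_sub_distrib, hgsum, ← Finset.mul_sum, hgsum,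
      Finset.sum_const, Finset.card_univ, Fintype.card_fin, nsmul_eq_mul, ← hnndef]
    ring
  -- the cut identity
  have hC : C = (d:ℝ) * s - Q := by
    rw [hCdef, hQdef]
    have h : ∀ i, ∑ t ∈ Sᶜ, A i t = (d:ℝ) - ∑ t ∈ S, A i t := by
      intro i
      have := Finset.sum_add_sum_compl S (fun t => A i t)
      rw [hrowsum i] at this
      linarith
    simp_rw [h]
    rw [Finset.sum_sub_distrib, Finset.sum_const, nsmul_eq_mul, ← hsdef, mul_comm]
  -- final arithmetic
  rw [hIP, hNS] at hkey
  have e3 : r^2*((d:ℝ)*nn) = (d:ℝ)*(r*s) := by rw [sq, ← hr]; ring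
  have e4 : lam*(s - 2*r*s + r^2*nn) = lam*(s - 2*r*s + r*s) := by rw [sq, ← hr]; ring
  have hkey2 : Q - 2*r*((d:ℝ)*s) + (d:ℝ)*(r*s) ≤ lam*(s - 2*r*s + r*s) := by
    linarith [hkey, e3, e4]
  rw [div_le_div_iff₀ two_pos hs0]
  nlinarith [hkey2, hC, mul_nonneg (sub_nonneg.mpr hcase.le)
    (mul_nonneg hs0.le (by linarith : (0:ℝ) ≤ 1 - 2*r))]
end
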